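/- Let Θ = (α, β, γ) be an autotopism of a Latin square L of order n, let t be a cycle length of γ with l_t^γ cycles of γ having length t, and let r be a cycle length of α. Suppose u is a cycle length of β such that for every i in a cycle of α of length r and every j in a cycle of β of length u, the symbol l_{i,j} lies in a cycle of γ of length t. Then u · l_u^β ≤ t · l_t^γ, where l_u^β is the number of cycles of β of length u. -/

import Mathlib

open Classical

/-- Number of cycles of length `r` in the disjoint cycle decomposition of `δ`
(fixed points count as cycles of length 1). -/
noncomputable def cyclesOfLen {n : ℕ} (δ : Equiv.Perm (Fin n)) (r : ℕ) : ℕ :=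
  (Finset.univ.filter fun x : Fin n => Function.minimalPeriod (⇑δ) x = r).card / r

/-- `L` is (the table of) a Latin square of order `n`. -/
def IsLatinSquare {n : ℕ} (L : Fin n → Fin n → Fin n) : Prop :=
  (∀ i, Function.Bijective (L i)) ∧ ∀ j, Function.Bijective fun i => L i j

/-- `(α, β, γ)` is an autotopism of `L`: `(i,j,k) ∈ L → (α i, β j, γ k) ∈ L`. -/
def IsAutotopism {n : ℕ} (L : Fin n → Fin n → Fin n)
    (α β γ : Equiv.Perm (Fin n)) : Prop :=
  ∀ i j, L (α i) (β j) = γ (L i j)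


lemma perm_mem_periodicPts {n : ℕ} (δ : Equiv.Perm (Fin n)) (x : Fin n) :
    x ∈ Function.periodicPts (⇑δ) := by
  refine ⟨orderOf δ, orderOf_pos δ, ?_⟩
  show (⇑δ)^[orderOf δ] x = x
  rw [Equiv.Perm.iterate_eq_pow, pow_orderOf_eq_one]
  rfl

lemma sameCycle_minimalPeriod {n : ℕ} (δ : Equiv.Perm (Fin n)) {x y : Fin n}
    (h : δ.SameCycle x y) :
    Function.minimalPeriod (⇑δ) y = Function.minimalPeriod (⇑δ) x := by
  obtain ⟨i, hi, rfl⟩ := h.exists_pow_eq'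
  rw [← Equiv.Perm.iterate_eq_pow]
  exact Function.minimalPeriod_apply_iterate (perm_mem_periodicPts δ x) i

lemma card_sameCycle {n : ℕ} (δ : Equiv.Perm (Fin n)) (x : Fin n) :
    (Finset.univ.filter fun y => δ.SameCycle x y).card
      = Function.minimalPeriod (⇑δ) x := by
  set m := Function.minimalPeriod (⇑δ) x with hm
  have hmpos : 0 < m := Function.minimalPeriod_pos_of_mem_periodicPts
    (perm_mem_periodicPts δ x)
  have : (Finset.univ.filter fun y => δ.SameCycle x y)
      = (Finset.range m).image (fun k => (⇑δ)^[k] x) := by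
    ext y
    simp only [Finset.mem_filter, Finset.mem_univ, true_and, Finset.mem_image,
      Finset.mem_range]
    constructor
    · intro h
      obtain ⟨i, hi, rfl⟩ := h.exists_pow_eq'
      refine ⟨i % m, Nat.mod_lt _ hmpos, ?_⟩
      rw [Function.iterate_mod_minimalPeriod_eq, Equiv.Perm.iterate_eq_pow]
    · rintro ⟨k, _, rfl⟩
      exact ⟨(k : ℤ), by rw [zpow_natCast, ← Equiv.Perm.iterate_eq_pow]⟩
  rw [this, Finset.card_image_of_injOn, Finset.card_range]
  intro a ha b hb hab
  exact Function.iterate_injOn_Iio_minimalPeriod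
    (by simpa using Finset.mem_range.mp ha) (by simpa using Finset.mem_range.mp hb) hab

lemma dvd_card_minimalPeriod {n : ℕ} (δ : Equiv.Perm (Fin n)) (m : ℕ) :
    m ∣ (Finset.univ.filter fun x : Fin n => Function.minimalPeriod (⇑δ) x = m).card := by
  set S := Finset.univ.filter fun x : Fin n => Function.minimalPeriod (⇑δ) x = m with hS
  let sc : Setoid (Fin n) := ⟨δ.SameCycle, Equiv.Perm.SameCycle.refl δ,
    fun h => h.symm, fun h h' => h.trans h'⟩
  haveI : DecidableEq (Quotient sc) := Classical.decEq _
  have hcard := Finset.card_eq_sum_card_fiberwise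
    (f := fun x => Quotient.mk sc x) (s := S) (t := S.image (fun x => Quotient.mk sc x))
    (fun x hx => Finset.mem_image_of_mem _ hx)
  rw [hcard]
  apply Finset.dvd_sum
  intro q hq
  obtain ⟨x, hxS, rfl⟩ := Finset.mem_image.mp hq
  have hxm : Function.minimalPeriod (⇑δ) x = m := (Finset.mem_filter.mp hxS).2
  have : S.filter (fun y => Quotient.mk sc y = Quotient.mk sc x)
      = Finset.univ.filter fun y => δ.SameCycle x y := by
    ext y
    simp only [Finset.mem_filter, Finset.mem_univ, true_and, hS]
    constructor
    · rintro ⟨-, h⟩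
      exact (Quotient.eq.mp h : sc.r y x).symm
    · intro h
      exact ⟨by rw [sameCycle_minimalPeriod δ h, hxm], Quotient.sound (h.symm : sc.r y x)⟩
  rw [this, card_sameCycle, hxm]

theorem stmt15 {n : ℕ} (L : Fin n → Fin n → Fin n) (α β γ : Equiv.Perm (Fin n))
    (hL : IsLatinSquare L) (hA : IsAutotopism L α β γ) (r u t : ℕ)
    (ht : ∃ x, Function.minimalPeriod (⇑γ) x = t)
    (hr : ∃ x, Function.minimalPeriod (⇑α) x = r)
    (hu : ∃ y, Function.minimalPeriod (⇑β) y = u)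
    (hall : ∀ i j, Function.minimalPeriod (⇑α) i = r → Function.minimalPeriod (⇑β) j = u →
      Function.minimalPeriod (⇑γ) (L i j) = t) :
    u * cyclesOfLen β u ≤ t * cyclesOfLen γ t := by
  obtain ⟨i₀, hi₀⟩ := hr
  set S := Finset.univ.filter fun j : Fin n => Function.minimalPeriod (⇑β) j = u with hSdef
  set T := Finset.univ.filter fun k : Fin n => Function.minimalPeriod (⇑γ) k = t with hTdef
  have hle : S.card ≤ T.card := by
    apply Finset.card_le_card_of_injOn (fun j => L i₀ j)
    · intro j hj
      simp only [hSdef, hTdef, Finset.mem_filter, Finset.mem_univ, true_and] at hj ⊢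
      simpa using hall i₀ j hi₀ (by simpa using hj)
    · intro a _ b _ hab
      exact (hL.1 i₀).injective hab
  have h1 : u * cyclesOfLen β u = S.card :=
    Nat.mul_div_cancel' (dvd_card_minimalPeriod β u)
  have h2 : t * cyclesOfLen γ t = T.card :=
    Nat.mul_div_cancel' (dvd_card_minimalPeriod γ t)
  rw [h1, h2]; exact hle
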